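/- Let α ∈ ℝ[t] be nonzero, let b ∈ ℍ[t] be vectorial, and let A ∈ ℍ[t] be nonzero and reduced with respect to i. Set c = α·b′ − α′·b, where ′ denotes the formal polynomial derivative. Then the following three conditions are equivalent: (i) c·(A i Ā) = (A i Ā)·c (vanishing cross product of the vector parts); (ii) c·(A j Ā) + (A j Ā)·c = 0 and c·(A k Ā) + (A k Ā)·c = 0 (orthogonality of the vector parts of c to those of A j Ā and A k Ā); (iii) there exists μ ∈ ℝ[t] such that c = μ·(A i Ā). -/

import Mathlib

open Polynomial

noncomputable section

/-- The quaternion unit `i`. -/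
def qi : Quaternion ℝ := ⟨0, 1, 0, 0⟩
/-- The quaternion unit `j`. -/
def qj : Quaternion ℝ := ⟨0, 0, 1, 0⟩
/-- The quaternion unit `k`. -/
def qk : Quaternion ℝ := ⟨0, 0, 0, 1⟩

/-- Embedding of real polynomials into quaternion polynomials (scalar coefficients). -/
def toQ : Polynomial ℝ →+* Polynomial (Quaternion ℝ) :=
  mapRingHom (algebraMap ℝ (Quaternion ℝ))

/-- Coefficientwise quaternion conjugation of a quaternion polynomial. -/
def pconj (p : Polynomial (Quaternion ℝ)) : Polynomial (Quaternion ℝ) :=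
  p.sum fun n a => monomial n (star a)

/-- `A ∈ ℍ[t]` is *reduced with respect to `i`* if it has no real polynomial factor of
positive degree and no right factor of positive degree all of whose coefficients lie in the
subalgebra of `ℍ` generated by `1` and `i`. -/
def ReducedWrtI (A : Polynomial (Quaternion ℝ)) : Prop :=
  (∀ ψ : Polynomial ℝ, ∀ A' : Polynomial (Quaternion ℝ), A = toQ ψ * A' → ψ.natDegree = 0) ∧
  (∀ A' R : Polynomial (Quaternion ℝ), A = A' * R →
    (∀ n, (R.coeff n).imJ = 0 ∧ (R.coeff n).imK = 0) → R.natDegree = 0)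

open scoped Quaternion

def ι : ℂ →+* Quaternion ℝ where
  toFun z := ⟨z.re, z.im, 0, 0⟩
  map_one' := by ext <;> simp
  map_mul' z w := by
    show (⟨(z*w).re, (z*w).im, 0, 0⟩ : Quaternion ℝ) = (⟨z.re, z.im, 0, 0⟩ : Quaternion ℝ) * ⟨w.re, w.im, 0, 0⟩
    ext <;> simp [Quaternion.re_mul, Quaternion.imI_mul, Quaternion.imJ_mul, Quaternion.imK_mul] <;> ring
  map_zero' := by ext <;> simp
  map_add' z w := by
    show (⟨(z+w).re, (z+w).im, 0, 0⟩ : Quaternion ℝ) = (⟨z.re, z.im, 0, 0⟩ : Quaternion ℝ) + ⟨w.re, w.im, 0, 0⟩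
    ext <;> simp
@[simp] lemma ι_re (z : ℂ) : (ι z).re = z.re := rfl
@[simp] lemma ι_imI (z : ℂ) : (ι z).imI = z.im := rfl
@[simp] lemma ι_imJ (z : ℂ) : (ι z).imJ = 0 := rfl
@[simp] lemma ι_imK (z : ℂ) : (ι z).imK = 0 := rfl
@[simp] lemma qi_re : qi.re = 0 := rfl
@[simp] lemma qi_imI : qi.imI = 1 := rfl
@[simp] lemma qi_imJ : qi.imJ = 0 := rfl
@[simp] lemma qi_imK : qi.imK = 0 := rfl
@[simp] lemma qj_re : qj.re = 0 := rfl
@[simp] lemma qj_imI : qj.imI = 0 := rfl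
@[simp] lemma qj_imJ : qj.imJ = 1 := rfl
@[simp] lemma qj_imK : qj.imK = 0 := rfl
@[simp] lemma qk_re : qk.re = 0 := rfl
@[simp] lemma qk_imI : qk.imI = 0 := rfl
@[simp] lemma qk_imJ : qk.imJ = 0 := rfl
@[simp] lemma qk_imK : qk.imK = 1 := rfl
def q1 (a : Quaternion ℝ) : ℂ := ⟨a.re, a.imI⟩
def q2 (a : Quaternion ℝ) : ℂ := ⟨a.imJ, a.imK⟩
lemma q1_zero : q1 0 = 0 := by simp [q1, Complex.ext_iff]
lemma q2_zero : q2 0 = 0 := by simp [q2, Complex.ext_iff]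
lemma q1_add (a b : Quaternion ℝ) : q1 (a+b) = q1 a + q1 b := by simp [q1, Complex.ext_iff]
lemma q2_add (a b : Quaternion ℝ) : q2 (a+b) = q2 a + q2 b := by simp [q2, Complex.ext_iff]
lemma q1_iota (z : ℂ) : q1 (ι z) = z := by simp [q1, Complex.ext_iff]
lemma q2_iota (z : ℂ) : q2 (ι z) = 0 := by simp [q2, Complex.ext_iff]
lemma q1_iota_mul (z : ℂ) (a : Quaternion ℝ) : q1 (ι z * a) = z * q1 a := by
  simp [q1, Complex.ext_iff, Quaternion.re_mul, Quaternion.imI_mul]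
lemma q2_iota_mul (z : ℂ) (a : Quaternion ℝ) : q2 (ι z * a) = z * q2 a := by
  simp [q2, Complex.ext_iff, Quaternion.imJ_mul, Quaternion.imK_mul]
lemma q1_mul_qj (a : Quaternion ℝ) : q1 (a * qj) = -q2 a := by
  simp [q1, q2, Complex.ext_iff, Quaternion.re_mul, Quaternion.imI_mul]
lemma q2_mul_qj (a : Quaternion ℝ) : q2 (a * qj) = q1 a := by
  simp [q1, q2, Complex.ext_iff, Quaternion.imJ_mul, Quaternion.imK_mul]
lemma qj_mul_iota (z : ℂ) : qj * ι z = ι (starRingEnd ℂ z) * qj := by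
  ext <;> simp [Quaternion.re_mul, Quaternion.imI_mul, Quaternion.imJ_mul, Quaternion.imK_mul]
lemma q1_star (a : Quaternion ℝ) : q1 (star a) = starRingEnd ℂ (q1 a) := by
  simp [q1, Complex.ext_iff, Quaternion.re_star, Quaternion.imI_star]
lemma q2_star (a : Quaternion ℝ) : q2 (star a) = - q2 a := by
  simp [q2, Complex.ext_iff, Quaternion.imJ_star, Quaternion.imK_star]
lemma q_decomp (a : Quaternion ℝ) : a = ι (q1 a) + ι (q2 a) * qj := by
  ext <;> simp [q1, q2, Quaternion.re_mul, Quaternion.imI_mul, Quaternion.imJ_mul, Quaternion.imK_mul]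
lemma qj_mul_qj : qj * qj = -1 := by ext <;> simp [Quaternion.re_mul, Quaternion.imI_mul, Quaternion.imJ_mul, Quaternion.imK_mul]
lemma iota_I : ι Complex.I = qi := by ext <;> simp
lemma iota_ofReal (r : ℝ) : ι r = algebraMap ℝ (Quaternion ℝ) r := by ext <;> simp

lemma sum_monomial_coeff {S : Type*} [Semiring S] (g : Quaternion ℝ → S) (hg : g 0 = 0)
    (p : Polynomial (Quaternion ℝ)) (m : ℕ) :
    (p.sum fun n a => monomial n (g a)).coeff m = g (p.coeff m) := by
  rw [Polynomial.sum, finset_sum_coeff]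
  simp only [coeff_monomial]
  by_cases h : m ∈ p.support
  · rw [Finset.sum_eq_single m]
    · simp
    · intro b _ hb; simp [hb]
    · intro hm; exact absurd h hm
  · rw [Finset.sum_eq_zero, notMem_support_iff.mp h, hg]
    intro b hb
    have : b ≠ m := fun e => (e ▸ h) hb
    simp [this]

lemma pconj_coeff (p : Polynomial (Quaternion ℝ)) (m : ℕ) :
    (pconj p).coeff m = star (p.coeff m) :=
  sum_monomial_coeff _ (star_zero _) p m

/-- polynomial-level complex components -/
def q1P (p : Polynomial (Quaternion ℝ)) : Polynomial ℂ := p.sum fun n a => monomial n (q1 a)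
def q2P (p : Polynomial (Quaternion ℝ)) : Polynomial ℂ := p.sum fun n a => monomial n (q2 a)
lemma q1P_coeff (p) (m : ℕ) : (q1P p).coeff m = q1 (p.coeff m) := sum_monomial_coeff _ q1_zero p m
lemma q2P_coeff (p) (m : ℕ) : (q2P p).coeff m = q2 (p.coeff m) := sum_monomial_coeff _ q2_zero p m

def mapC : Polynomial ℂ →+* Polynomial (Quaternion ℝ) := mapRingHom ι
def cconj (Q : Polynomial ℂ) : Polynomial ℂ := Q.map (starRingEnd ℂ)
lemma mapC_coeff (Q : Polynomial ℂ) (n : ℕ) : (mapC Q).coeff n = ι (Q.coeff n) := coeff_map _ n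
lemma cconj_coeff (Q : Polynomial ℂ) (n : ℕ) : (cconj Q).coeff n = starRingEnd ℂ (Q.coeff n) := coeff_map _ n
lemma toQ_coeff (ψ : Polynomial ℝ) (n : ℕ) : (toQ ψ).coeff n = algebraMap ℝ (Quaternion ℝ) (ψ.coeff n) := coeff_map _ n

def toC : Polynomial ℝ →+* Polynomial ℂ := mapRingHom (algebraMap ℝ ℂ)
lemma toQ_eq_mapC_toC (ψ : Polynomial ℝ) : toQ ψ = mapC (toC ψ) := by
  refine Polynomial.ext fun n => ?_
  rw [toQ_coeff, ← iota_ofReal, mapC_coeff]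
  congr 1
  simp [toC]

-- polynomial multiplication rules
lemma q1P_mapC_mul (Q : Polynomial ℂ) (B : Polynomial (Quaternion ℝ)) :
    q1P (mapC Q * B) = Q * q1P B := by
  ext m
  rw [q1P_coeff, coeff_mul, coeff_mul]
  rw [show q1 (∑ x ∈ Finset.HasAntidiagonal.antidiagonal m, (mapC Q).coeff x.1 * B.coeff x.2)
      = ∑ x ∈ Finset.HasAntidiagonal.antidiagonal m, q1 ((mapC Q).coeff x.1 * B.coeff x.2) from by
    induction (Finset.HasAntidiagonal.antidiagonal m) using Finset.cons_induction with
    | empty => simp [q1_zero]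
    | cons a s ha ih => rw [Finset.sum_cons, Finset.sum_cons, q1_add, ih]]
  refine Finset.sum_congr rfl fun x _ => ?_
  rw [mapC_coeff, q1_iota_mul, q1P_coeff]
lemma q2P_mapC_mul (Q : Polynomial ℂ) (B : Polynomial (Quaternion ℝ)) :
    q2P (mapC Q * B) = Q * q2P B := by
  ext m
  rw [q2P_coeff, coeff_mul, coeff_mul]
  rw [show q2 (∑ x ∈ Finset.HasAntidiagonal.antidiagonal m, (mapC Q).coeff x.1 * B.coeff x.2)
      = ∑ x ∈ Finset.HasAntidiagonal.antidiagonal m, q2 ((mapC Q).coeff x.1 * B.coeff x.2) from by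
    induction (Finset.HasAntidiagonal.antidiagonal m) using Finset.cons_induction with
    | empty => simp [q2_zero]
    | cons a s ha ih => rw [Finset.sum_cons, Finset.sum_cons, q2_add, ih]]
  refine Finset.sum_congr rfl fun x _ => ?_
  rw [mapC_coeff, q2_iota_mul, q2P_coeff]
lemma q1P_mul_Cqj (B : Polynomial (Quaternion ℝ)) : q1P (B * C qj) = - q2P B := by
  ext m; rw [q1P_coeff, coeff_mul_C, q1_mul_qj, coeff_neg, q2P_coeff]
lemma q2P_mul_Cqj (B : Polynomial (Quaternion ℝ)) : q2P (B * C qj) = q1P B := by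
  ext m; rw [q2P_coeff, coeff_mul_C, q2_mul_qj, q1P_coeff]
lemma q1P_mapC (Q : Polynomial ℂ) : q1P (mapC Q) = Q := by
  ext m; rw [q1P_coeff, mapC_coeff, q1_iota]
lemma q2P_mapC (Q : Polynomial ℂ) : q2P (mapC Q) = 0 := by
  ext m; rw [q2P_coeff, mapC_coeff, q2_iota]; simp
lemma Cqj_mul_mapC (Q : Polynomial ℂ) : C qj * mapC Q = mapC (cconj Q) * C qj := by
  refine Polynomial.ext fun m => ?_
  rw [coeff_C_mul, coeff_mul_C, mapC_coeff, mapC_coeff, cconj_coeff, ← qj_mul_iota]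
lemma mapC_mul_Cqj (Q : Polynomial ℂ) : mapC Q * C qj = C qj * mapC (cconj Q) := by
  rw [Cqj_mul_mapC]
  congr 1
  refine Polynomial.ext fun m => ?_
  simp [mapC_coeff, cconj_coeff]
lemma q_star_decomp (a : Quaternion ℝ) :
    star a = ι (starRingEnd ℂ (q1 a)) - ι (q2 a) * qj := by
  ext <;> simp [q1, q2, Quaternion.re_star, Quaternion.imI_star, Quaternion.imJ_star,
    Quaternion.imK_star, Quaternion.re_mul, Quaternion.imI_mul, Quaternion.imJ_mul, Quaternion.imK_mul]
lemma pconj_eq (B : Polynomial (Quaternion ℝ)) :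
    pconj B = mapC (cconj (q1P B)) - mapC (q2P B) * C qj := by
  refine Polynomial.ext fun m => ?_
  rw [pconj_coeff, coeff_sub, mapC_coeff, cconj_coeff, q1P_coeff, coeff_mul_C, mapC_coeff, q2P_coeff]
  exact q_star_decomp _
lemma poly_decomp (B : Polynomial (Quaternion ℝ)) :
    B = mapC (q1P B) + mapC (q2P B) * C qj := by
  refine Polynomial.ext fun m => ?_
  rw [coeff_add, mapC_coeff, coeff_mul_C, mapC_coeff, q1P_coeff, q2P_coeff]
  exact q_decomp _

lemma pconj_mul (p q : Polynomial (Quaternion ℝ)) : pconj (p * q) = pconj q * pconj p := by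
  refine Polynomial.ext fun n => ?_
  rw [pconj_coeff, coeff_mul, coeff_mul]
  conv_rhs => rw [← Finset.HasAntidiagonal.map_swap_antidiagonal, Finset.sum_map]
  rw [star_sum]
  refine Finset.sum_congr rfl fun x _ => ?_
  simp [pconj_coeff, star_mul]
lemma pconj_add (p q) : pconj (p + q) = pconj p + pconj q := by
  refine Polynomial.ext fun n => ?_
  simp [pconj_coeff, star_add]
lemma pconj_pconj (p) : pconj (pconj p) = p := by
  refine Polynomial.ext fun n => ?_
  simp [pconj_coeff]
lemma pconj_neg (p) : pconj (-p) = - pconj p := by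
  refine Polynomial.ext fun n => ?_
  simp [pconj_coeff]
lemma pconj_sub (p q) : pconj (p - q) = pconj p - pconj q := by
  refine Polynomial.ext fun n => ?_
  simp [pconj_coeff, star_sub]
lemma pconj_eq_zero {p} : pconj p = 0 ↔ p = 0 := by
  constructor
  · intro h; refine Polynomial.ext fun n => ?_
    have := congrArg (fun q => Polynomial.coeff q n) h
    simp [pconj_coeff] at this
    simpa using this
  · rintro rfl; refine Polynomial.ext fun n => ?_; simp [pconj_coeff]
lemma pconj_toQ (ψ : Polynomial ℝ) : pconj (toQ ψ) = toQ ψ := by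
  refine Polynomial.ext fun n => ?_
  rw [pconj_coeff, toQ_coeff]
  ext <;> simp [Quaternion.re_star, Quaternion.imI_star, Quaternion.imJ_star, Quaternion.imK_star,
    Quaternion.re_coe]
lemma pconj_derivative (p) : pconj (derivative p) = derivative (pconj p) := by
  refine Polynomial.ext fun n => ?_
  rw [pconj_coeff, coeff_derivative, coeff_derivative, pconj_coeff, star_mul]
  have : star ((n : Quaternion ℝ) + 1) = (n : Quaternion ℝ) + 1 := by
    ext <;> simp
  rw [this]
  have h2 : ((n : Quaternion ℝ) + 1) = (((n : ℝ) + 1 : ℝ) : Quaternion ℝ) := by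
    push_cast; ring
  rw [h2, Quaternion.coe_commutes]
lemma toQ_comm (ψ : Polynomial ℝ) (p : Polynomial (Quaternion ℝ)) : toQ ψ * p = p * toQ ψ := by
  refine Polynomial.ext fun n => ?_
  rw [coeff_mul, coeff_mul]
  conv_rhs => rw [← Finset.HasAntidiagonal.map_swap_antidiagonal, Finset.sum_map]
  refine Finset.sum_congr rfl fun x _ => ?_
  simp only [Function.Embedding.coeFn_mk, Equiv.coe_toEmbedding, Equiv.prodComm_apply, Prod.swap]
  rw [toQ_coeff]
  exact (Algebra.commutes _ _)

-- structure lemmas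
def rP (p : Polynomial (Quaternion ℝ)) : Polynomial ℝ := p.sum fun n a => monomial n a.re
def iP (p : Polynomial (Quaternion ℝ)) : Polynomial ℝ := p.sum fun n a => monomial n a.imI
lemma rP_coeff (p) (n : ℕ) : (rP p).coeff n = (p.coeff n).re := sum_monomial_coeff _ rfl p n
lemma iP_coeff (p) (n : ℕ) : (iP p).coeff n = (p.coeff n).imI := sum_monomial_coeff _ rfl p n

lemma real_struct {s : Polynomial (Quaternion ℝ)} (h : pconj s = s) : toQ (rP s) = s := by
  refine Polynomial.ext fun n => ?_
  have hc : star (s.coeff n) = s.coeff n := by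
    have := congrArg (fun q => Polynomial.coeff q n) h
    simpa [pconj_coeff] using this
  rw [toQ_coeff, rP_coeff]
  ext
  · simp
  · have := congrArg QuaternionAlgebra.imI hc
    simp [Quaternion.imI_star] at this
    simp
    linarith
  · have := congrArg QuaternionAlgebra.imJ hc
    simp [Quaternion.imJ_star] at this
    simp
    linarith
  · have := congrArg QuaternionAlgebra.imK hc
    simp [Quaternion.imK_star] at this
    simp
    linarith

lemma quat_vect_i {d : Quaternion ℝ} (h1 : star d = -d) (h2 : d * qi = qi * d) :
    d = algebraMap ℝ (Quaternion ℝ) d.imI * qi := by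
  have hre : d.re = 0 := by
    have := congrArg QuaternionAlgebra.re h1
    simp [Quaternion.re_star] at this
    linarith
  have hJ := congrArg QuaternionAlgebra.imJ h2
  have hK := congrArg QuaternionAlgebra.imK h2
  simp [Quaternion.imJ_mul, Quaternion.imK_mul] at hJ hK
  ext <;> simp [hre, Quaternion.re_mul, Quaternion.imI_mul, Quaternion.imJ_mul, Quaternion.imK_mul] <;> linarith

lemma vect_i_struct {D : Polynomial (Quaternion ℝ)} (h1 : pconj D = -D)
    (h2 : D * C qi = C qi * D) : D = toQ (iP D) * C qi := by
  refine Polynomial.ext fun n => ?_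
  rw [coeff_mul_C, toQ_coeff, iP_coeff]
  refine quat_vect_i ?_ ?_
  · have := congrArg (fun q => Polynomial.coeff q n) h1
    simpa [pconj_coeff] using this
  · have h2n := congrArg (fun q => Polynomial.coeff q n) h2
    simpa [coeff_mul_C, coeff_C_mul] using h2n

lemma toQ_eq_zero {ψ : Polynomial ℝ} : toQ ψ = 0 ↔ ψ = 0 := by
  constructor
  · intro h
    refine Polynomial.ext fun n => ?_
    have := congrArg (fun q => Polynomial.coeff q n) h
    simp only [toQ_coeff, coeff_zero] at this
    have := congrArg QuaternionAlgebra.re this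
    simpa using this
  · rintro rfl; simp

lemma pconjA_ne {A : Polynomial (Quaternion ℝ)} (hA : A ≠ 0) : pconj A ≠ 0 :=
  fun h => hA (pconj_eq_zero.mp h)

lemma pconj_NA (A : Polynomial (Quaternion ℝ)) : pconj (A * pconj A) = A * pconj A := by
  rw [pconj_mul, pconj_pconj]

/-- the real norm polynomial -/
def nuP (A : Polynomial (Quaternion ℝ)) : Polynomial ℝ := rP (A * pconj A)

lemma toQ_nuP (A : Polynomial (Quaternion ℝ)) : toQ (nuP A) = A * pconj A :=
  real_struct (pconj_NA A)

lemma nuP_ne {A : Polynomial (Quaternion ℝ)} (hA : A ≠ 0) : nuP A ≠ 0 := by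
  intro h
  have : toQ (nuP A) = 0 := by rw [h]; simp
  rw [toQ_nuP] at this
  exact (mul_ne_zero hA (pconjA_ne hA)) this

lemma pconjA_mul_A {A : Polynomial (Quaternion ℝ)} (hA : A ≠ 0) :
    pconj A * A = toQ (nuP A) := by
  have h : A * (pconj A * A) = A * toQ (nuP A) := by
    calc A * (pconj A * A) = (A * pconj A) * A := (mul_assoc _ _ _).symm
    _ = toQ (nuP A) * A := by rw [toQ_nuP]
    _ = A * toQ (nuP A) := toQ_comm _ _
  exact mul_left_cancel₀ hA h

-- pair-component multiplication rules
def q1h : Quaternion ℝ →+ ℂ := { toFun := q1, map_zero' := q1_zero, map_add' := q1_add }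
def q2h : Quaternion ℝ →+ ℂ := { toFun := q2, map_zero' := q2_zero, map_add' := q2_add }

lemma q1_mul (a b : Quaternion ℝ) :
    q1 (a * b) = q1 a * q1 b - q2 a * starRingEnd ℂ (q2 b) := by
  simp [q1, q2, Complex.ext_iff, Quaternion.re_mul, Quaternion.imI_mul]
  constructor <;> ring
lemma q2_mul (a b : Quaternion ℝ) :
    q2 (a * b) = q1 a * q2 b + q2 a * starRingEnd ℂ (q1 b) := by
  simp [q1, q2, Complex.ext_iff, Quaternion.imJ_mul, Quaternion.imK_mul]
  constructor <;> ring

lemma q1P_mul (B B' : Polynomial (Quaternion ℝ)) :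
    q1P (B * B') = q1P B * q1P B' - q2P B * cconj (q2P B') := by
  refine Polynomial.ext fun n => ?_
  rw [q1P_coeff, coeff_mul, coeff_sub, coeff_mul, coeff_mul]
  rw [show q1 (∑ x ∈ Finset.HasAntidiagonal.antidiagonal n, B.coeff x.1 * B'.coeff x.2)
      = ∑ x ∈ Finset.HasAntidiagonal.antidiagonal n, q1 (B.coeff x.1 * B'.coeff x.2) from
    map_sum q1h _ _, ← Finset.sum_sub_distrib]
  refine Finset.sum_congr rfl fun x _ => ?_
  simp [q1_mul, q1P_coeff, q2P_coeff, cconj_coeff]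
lemma q2P_mul (B B' : Polynomial (Quaternion ℝ)) :
    q2P (B * B') = q1P B * q2P B' + q2P B * cconj (q1P B') := by
  refine Polynomial.ext fun n => ?_
  rw [q2P_coeff, coeff_mul, coeff_add, coeff_mul, coeff_mul]
  rw [show q2 (∑ x ∈ Finset.HasAntidiagonal.antidiagonal n, B.coeff x.1 * B'.coeff x.2)
      = ∑ x ∈ Finset.HasAntidiagonal.antidiagonal n, q2 (B.coeff x.1 * B'.coeff x.2) from
    map_sum q2h _ _, ← Finset.sum_add_distrib]
  refine Finset.sum_congr rfl fun x _ => ?_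
  simp [q2_mul, q1P_coeff, q2P_coeff, cconj_coeff]

lemma q1P_pconj (B : Polynomial (Quaternion ℝ)) : q1P (pconj B) = cconj (q1P B) := by
  refine Polynomial.ext fun n => ?_
  rw [q1P_coeff, pconj_coeff, q1_star, cconj_coeff, q1P_coeff]
lemma q2P_pconj (B : Polynomial (Quaternion ℝ)) : q2P (pconj B) = - q2P B := by
  refine Polynomial.ext fun n => ?_
  rw [q2P_coeff, pconj_coeff, q2_star, coeff_neg, q2P_coeff]
lemma q1P_Cqi : q1P (C qi) = C Complex.I := by
  refine Polynomial.ext fun n => ?_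
  rw [q1P_coeff]
  by_cases h : n = 0 <;> simp [h, coeff_C, q1_zero, q1, Complex.ext_iff]
lemma q2P_Cqi : q2P (C qi) = 0 := by
  refine Polynomial.ext fun n => ?_
  rw [q2P_coeff]
  by_cases h : n = 0 <;> simp [h, coeff_C, q2_zero, q2, Complex.ext_iff]

lemma cconj_mul (P Q : Polynomial ℂ) : cconj (P * Q) = cconj P * cconj Q := Polynomial.map_mul _
lemma cconj_cconj (P : Polynomial ℂ) : cconj (cconj P) = P := by
  refine Polynomial.ext fun n => ?_
  simp [cconj_coeff]
lemma cconj_neg (P : Polynomial ℂ) : cconj (-P) = - cconj P := by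
  refine Polynomial.ext fun n => ?_
  simp [cconj_coeff]
lemma cconj_zero : cconj 0 = 0 := Polynomial.map_zero _
lemma cconj_CI : cconj (C Complex.I) = - C Complex.I := by
  refine Polynomial.ext fun n => ?_
  by_cases h : n = 0 <;> simp [cconj_coeff, coeff_C, h]

lemma q1P_F (A : Polynomial (Quaternion ℝ)) :
    q1P (A * C qi * pconj A)
      = C Complex.I * (q1P A * cconj (q1P A) - q2P A * cconj (q2P A)) := by
  simp only [q1P_mul, q2P_mul, q1P_pconj, q2P_pconj, q1P_Cqi, q2P_Cqi, cconj_neg, cconj_cconj,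
    cconj_CI, cconj_zero]
  ring
lemma q2P_F (A : Polynomial (Quaternion ℝ)) :
    q2P (A * C qi * pconj A) = -(2 * C Complex.I * (q1P A * q2P A)) := by
  simp only [q1P_mul, q2P_mul, q1P_pconj, q2P_pconj, q1P_Cqi, q2P_Cqi, cconj_neg, cconj_cconj,
    cconj_CI, cconj_zero]
  ring

-- sandwich products
lemma central_left (ψ : Polynomial ℝ) (x z : Polynomial (Quaternion ℝ)) :
    x * (toQ ψ * z) = toQ ψ * (x * z) := by
  rw [← mul_assoc, ← toQ_comm, mul_assoc]

lemma pconj_C (u : Quaternion ℝ) : pconj (C u) = C (star u) := by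
  refine Polynomial.ext fun n => ?_
  rw [pconj_coeff]
  by_cases h : n = 0 <;> simp [coeff_C, h]

lemma sandwich_mul {A : Polynomial (Quaternion ℝ)} (hA : A ≠ 0) (u v : Quaternion ℝ) :
    (A * C u * pconj A) * (A * C v * pconj A) = toQ (nuP A) * (A * C (u * v) * pconj A) := by
  have h1 : pconj A * A = toQ (nuP A) := pconjA_mul_A hA
  calc (A * C u * pconj A) * (A * C v * pconj A)
      = A * (C u * ((pconj A * A) * (C v * pconj A))) := by simp only [mul_assoc]
    _ = A * (C u * (toQ (nuP A) * (C v * pconj A))) := by rw [h1]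
    _ = A * (toQ (nuP A) * (C u * (C v * pconj A))) := by rw [central_left]
    _ = toQ (nuP A) * (A * (C u * (C v * pconj A))) := by rw [central_left]
    _ = toQ (nuP A) * (A * C (u * v) * pconj A) := by rw [C_mul]; simp only [mul_assoc]

lemma sandwich_neg (A : Polynomial (Quaternion ℝ)) (u : Quaternion ℝ) :
    A * C (-u) * pconj A = -(A * C u * pconj A) := by
  rw [C_neg]
  simp only [neg_mul, mul_neg]

lemma pconj_sandwich (A : Polynomial (Quaternion ℝ)) (u : Quaternion ℝ) :
    pconj (A * C u * pconj A) = A * C (star u) * pconj A := by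
  rw [pconj_mul, pconj_pconj, pconj_mul, pconj_C]
  simp only [mul_assoc]

-- quaternion unit arithmetic
lemma star_qi : star qi = -qi := by ext <;> simp
lemma star_qj : star qj = -qj := by ext <;> simp
lemma star_qk : star qk = -qk := by ext <;> simp
lemma qi_mul_qj : qi * qj = qk := by ext <;> simp [Quaternion.re_mul, Quaternion.imI_mul, Quaternion.imJ_mul, Quaternion.imK_mul]
lemma qj_mul_qi : qj * qi = -qk := by ext <;> simp [Quaternion.re_mul, Quaternion.imI_mul, Quaternion.imJ_mul, Quaternion.imK_mul]
lemma qi_mul_qk : qi * qk = -qj := by ext <;> simp [Quaternion.re_mul, Quaternion.imI_mul, Quaternion.imJ_mul, Quaternion.imK_mul]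
lemma qk_mul_qi : qk * qi = qj := by ext <;> simp [Quaternion.re_mul, Quaternion.imI_mul, Quaternion.imJ_mul, Quaternion.imK_mul]
lemma qj_mul_qk : qj * qk = qi := by ext <;> simp [Quaternion.re_mul, Quaternion.imI_mul, Quaternion.imJ_mul, Quaternion.imK_mul]
lemma qk_mul_qj : qk * qj = -qi := by ext <;> simp [Quaternion.re_mul, Quaternion.imI_mul, Quaternion.imJ_mul, Quaternion.imK_mul]
lemma qi_ne : qi ≠ 0 := by
  intro h; have := congrArg QuaternionAlgebra.imI h; simp at this
lemma qj_ne : qj ≠ 0 := by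
  intro h; have := congrArg QuaternionAlgebra.imJ h; simp at this

lemma self_real_cancel {x : Polynomial (Quaternion ℝ)} (hx : pconj x = x) (h : x + x = 0) :
    x = 0 := by
  have hs : toQ (rP x) = x := real_struct hx
  have h2 : toQ (rP x + rP x) = 0 := by rw [map_add, hs, h]
  have h3 : rP x + rP x = 0 := toQ_eq_zero.mp h2
  have h4 : (2 : Polynomial ℝ) * rP x = 0 := by rw [two_mul]; exact h3
  rcases mul_eq_zero.mp h4 with h5 | h5
  · exact absurd h5 two_ne_zero
  · rw [← hs, h5]; simp

section equiv12
variable {A c : Polynomial (Quaternion ℝ)}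

lemma comm_implies_ortho (hA : A ≠ 0) (hc : pconj c = -c)
    (h : c * (A * C qi * pconj A) = (A * C qi * pconj A) * c) :
    c * (A * C qj * pconj A) + (A * C qj * pconj A) * c = 0 ∧
    c * (A * C qk * pconj A) + (A * C qk * pconj A) * c = 0 := by
  set F := A * C qi * pconj A with hF
  set G := A * C qj * pconj A with hG
  set H := A * C qk * pconj A with hH
  set Nq := toQ (nuP A) with hNq
  have hNne : Nq ≠ 0 := by
    rw [hNq, Ne, toQ_eq_zero]; exact nuP_ne hA
  have hcen : ∀ x z : Polynomial (Quaternion ℝ), x * (Nq * z) = Nq * (x * z) :=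
    fun x z => central_left (nuP A) x z
  have hFG : F * G = Nq * H := by rw [hF, hG, sandwich_mul hA, qi_mul_qj]
  have hGF : G * F = -(Nq * H) := by
    rw [hG, hF, sandwich_mul hA, qj_mul_qi, sandwich_neg, mul_neg]
  have hFH : F * H = -(Nq * G) := by
    rw [hF, hH, sandwich_mul hA, qi_mul_qk, sandwich_neg, mul_neg]
  have hHF : H * F = Nq * G := by rw [hH, hF, sandwich_mul hA, qk_mul_qi]
  have hpG : pconj G = -G := by rw [hG, pconj_sandwich, star_qj, sandwich_neg]
  have hpH : pconj H = -H := by rw [hH, pconj_sandwich, star_qk, sandwich_neg]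
  set s := c * G + G * c with hs
  set r := c * H + H * c with hr
  have hps : pconj s = s := by
    rw [hs, pconj_add, pconj_mul c G, pconj_mul G c, hc, hpG]
    simp only [neg_mul, mul_neg, neg_neg]
    exact add_comm _ _
  have hpr : pconj r = r := by
    rw [hr, pconj_add, pconj_mul c H, pconj_mul H c, hc, hpH]
    simp only [neg_mul, mul_neg, neg_neg]
    exact add_comm _ _
  have hscen : ∀ x : Polynomial (Quaternion ℝ), s * x = x * s := by
    intro x; rw [← real_struct hps, ← toQ_comm]
  have hrcen : ∀ x : Polynomial (Quaternion ℝ), r * x = x * r := by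
    intro x; rw [← real_struct hpr, ← toQ_comm]
  have t1 : F * (c * G) = Nq * (c * H) := by
    rw [← mul_assoc, ← h, mul_assoc, hFG, hcen]
  have t2 : F * (G * c) = Nq * (H * c) := by
    rw [← mul_assoc, hFG, mul_assoc]
  have key1 : F * s = Nq * r := by
    rw [hs, hr, mul_add, t1, t2, mul_add]
  have t3 : (c * G) * F = -(Nq * (c * H)) := by
    rw [mul_assoc, hGF, mul_neg, hcen]
  have t4 : (G * c) * F = -(Nq * (H * c)) := by
    rw [mul_assoc, h, ← mul_assoc, hGF, neg_mul, mul_assoc]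
  have key2 : s * F = -(Nq * r) := by
    rw [hs, hr, add_mul, t3, t4, mul_add, ← neg_add]
  have hr0 : r = 0 := by
    have he : Nq * r = -(Nq * r) := key1.symm.trans ((hscen F).symm.trans key2)
    have h1 : Nq * r + Nq * r = 0 := eq_neg_iff_add_eq_zero.mp he
    rw [← mul_add] at h1
    have h2 : r + r = 0 := by
      rcases mul_eq_zero.mp h1 with h' | h'
      · exact absurd h' hNne
      · exact h'
    exact self_real_cancel hpr h2
  have t5 : F * (c * H) = -(Nq * (c * G)) := by
    rw [← mul_assoc, ← h, mul_assoc, hFH, mul_neg, hcen]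
  have t6 : F * (H * c) = -(Nq * (G * c)) := by
    rw [← mul_assoc, hFH, neg_mul, mul_assoc]
  have key3 : F * r = -(Nq * s) := by
    rw [hr, hs, mul_add, t5, t6, mul_add, ← neg_add]
  have t7 : (c * H) * F = Nq * (c * G) := by
    rw [mul_assoc, hHF, hcen]
  have t8 : (H * c) * F = Nq * (G * c) := by
    rw [mul_assoc, h, ← mul_assoc, hHF, mul_assoc]
  have key4 : r * F = Nq * s := by
    rw [hr, hs, add_mul, t7, t8, mul_add]
  have hs0 : s = 0 := by
    have he : Nq * s = -(Nq * s) := key4.symm.trans ((hrcen F).trans key3)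
    have h1 : Nq * s + Nq * s = 0 := eq_neg_iff_add_eq_zero.mp he
    rw [← mul_add] at h1
    have h2 : s + s = 0 := by
      rcases mul_eq_zero.mp h1 with h' | h'
      · exact absurd h' hNne
      · exact h'
    exact self_real_cancel hps h2
  exact ⟨hs0, hr0⟩

lemma ortho_implies_comm (hA : A ≠ 0)
    (hg : c * (A * C qj * pconj A) + (A * C qj * pconj A) * c = 0)
    (hh : c * (A * C qk * pconj A) + (A * C qk * pconj A) * c = 0) :
    c * (A * C qi * pconj A) = (A * C qi * pconj A) * c := by
  set F := A * C qi * pconj A with hF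
  set G := A * C qj * pconj A with hG
  set H := A * C qk * pconj A with hH
  set Nq := toQ (nuP A) with hNq
  have hcen : ∀ x z : Polynomial (Quaternion ℝ), x * (Nq * z) = Nq * (x * z) :=
    fun x z => central_left (nuP A) x z
  have hGF : G * F = -(Nq * H) := by
    rw [hG, hF, sandwich_mul hA, qj_mul_qi, sandwich_neg, mul_neg]
  have hGc : G * c = -(c * G) := eq_neg_of_add_eq_zero_right hg
  have t9 : G * (c * F) = Nq * (c * H) := by
    rw [← mul_assoc, hGc, neg_mul, mul_assoc, hGF, mul_neg, neg_neg, hcen]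
  have t10 : G * (F * c) = -(Nq * (H * c)) := by
    rw [← mul_assoc, hGF, neg_mul, mul_assoc]
  have hu : G * (c * F - F * c) = Nq * (c * H + H * c) := by
    rw [mul_sub, t9, t10, sub_neg_eq_add, ← mul_add]
  rw [hh, mul_zero] at hu
  have hGne : G ≠ 0 := by
    rw [hG]
    exact mul_ne_zero (mul_ne_zero hA (Polynomial.C_ne_zero.mpr qj_ne)) (pconjA_ne hA)
  rcases mul_eq_zero.mp hu with h' | h'
  · exact absurd h' hGne
  · exact sub_eq_zero.mp h'
end equiv12

-- evaluation lemmas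
lemma toC_eval_conj (p : Polynomial ℝ) (z : ℂ) :
    (toC p).eval (starRingEnd ℂ z) = starRingEnd ℂ ((toC p).eval z) := by
  rw [show toC p = p.map (algebraMap ℝ ℂ) from rfl, eval_map, eval_map, hom_eval₂]
  congr 1
  ext r
  simp

lemma cconj_eval (P : Polynomial ℂ) (z : ℂ) :
    (cconj P).eval z = starRingEnd ℂ (P.eval (starRingEnd ℂ z)) := by
  rw [show cconj P = P.map (starRingEnd ℂ) from rfl, eval_map,
    show P.eval (starRingEnd ℂ z) = eval₂ (RingHom.id ℂ) (starRingEnd ℂ z) P from by rw [eval],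
    hom_eval₂]
  norm_num

lemma cconj_X_sub_C (w : ℂ) : cconj (X - C w) = X - C (starRingEnd ℂ w) := by
  refine Polynomial.ext fun n => ?_
  simp [cconj_coeff, coeff_X, coeff_C]
  split_ifs <;> simp

-- the reducedness argument
lemma reduced_no_root {A : Polynomial (Quaternion ℝ)} (hred : ReducedWrtI A) {z : ℂ}
    (h1 : (q1P A).eval z * (q2P A).eval z = 0)
    (h2 : (q1P A).eval (starRingEnd ℂ z) * (q2P A).eval (starRingEnd ℂ z) = 0)
    (h3 : (q1P A).eval z * starRingEnd ℂ ((q1P A).eval (starRingEnd ℂ z))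
        = (q2P A).eval z * starRingEnd ℂ ((q2P A).eval (starRingEnd ℂ z))) : False := by
  set P₁ := q1P A with hP1
  set P₂ := q2P A with hP2
  -- find w with P₁(w) = 0 and P₂(conj w) = 0
  have hw : ∃ w : ℂ, P₁.IsRoot w ∧ P₂.IsRoot (starRingEnd ℂ w) := by
    have hzz : starRingEnd ℂ (starRingEnd ℂ z) = z := Complex.conj_conj z
    have both : P₁.eval z = 0 → P₂.eval z = 0 → ∃ w, P₁.IsRoot w ∧ P₂.IsRoot (starRingEnd ℂ w) := by
      intro e1 e2
      rcases mul_eq_zero.mp h2 with e3 | e3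
      · exact ⟨starRingEnd ℂ z, e3, by rwa [hzz]⟩
      · exact ⟨z, e1, e3⟩
    rcases mul_eq_zero.mp h1 with e1 | e1
    · rw [e1, zero_mul] at h3
      rcases mul_eq_zero.mp h3.symm with e2 | e2
      · exact both e1 e2
      · have e2' : P₂.eval (starRingEnd ℂ z) = 0 := by
          simpa using congrArg (starRingEnd ℂ) e2
        exact ⟨z, e1, e2'⟩
    · rw [e1, zero_mul] at h3
      rcases mul_eq_zero.mp h3 with e2 | e2
      · exact both e2 e1
      · have e2' : P₁.eval (starRingEnd ℂ z) = 0 := by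
          simpa using congrArg (starRingEnd ℂ) e2
        exact ⟨starRingEnd ℂ z, e2', by rwa [hzz]⟩
  obtain ⟨w, hw1, hw2⟩ := hw
  obtain ⟨Q₁, hQ₁⟩ := (dvd_iff_isRoot).mpr hw1
  obtain ⟨Q₂, hQ₂⟩ := (dvd_iff_isRoot).mpr hw2
  set R : Polynomial (Quaternion ℝ) := X - C (ι w) with hR
  have hmapR : mapC (X - C w) = R := by
    refine Polynomial.ext fun n => ?_
    rw [mapC_coeff, hR, coeff_sub, coeff_sub, coeff_X, coeff_C, coeff_X, coeff_C]
    split_ifs <;> simp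
  have hAfac : A = (mapC Q₁ + C qj * mapC (cconj Q₂)) * R := by
    have hd : A = mapC P₁ + mapC P₂ * C qj := by rw [hP1, hP2]; exact poly_decomp A
    calc A = mapC P₁ + mapC P₂ * C qj := hd
      _ = mapC Q₁ * R + (C qj * mapC (cconj Q₂)) * R := by
          congr 1
          · rw [hQ₁, mul_comm, map_mul, hmapR]
          · calc mapC P₂ * C qj = C qj * mapC (cconj P₂) := mapC_mul_Cqj _
              _ = C qj * mapC (cconj Q₂ * (X - C w)) := by
                  rw [hQ₂, cconj_mul, cconj_X_sub_C, Complex.conj_conj, mul_comm]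
              _ = (C qj * mapC (cconj Q₂)) * R := by rw [map_mul, hmapR, mul_assoc]
      _ = (mapC Q₁ + C qj * mapC (cconj Q₂)) * R := (add_mul _ _ _).symm
  have hcoeffR : ∀ n, (R.coeff n).imJ = 0 ∧ (R.coeff n).imK = 0 := by
    intro n
    rw [hR, coeff_sub, coeff_X, coeff_C]
    constructor <;> (split_ifs <;> simp)
  have := hred.2 _ R hAfac hcoeffR
  rw [hR, natDegree_X_sub_C] at this
  exact one_ne_zero this

lemma comm_implies_key {A c : Polynomial (Quaternion ℝ)} (hA : A ≠ 0) (hc : pconj c = -c)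
    (h : c * (A * C qi * pconj A) = (A * C qi * pconj A) * c) :
    ∃ δ : Polynomial ℝ, toQ (nuP A * nuP A) * c = toQ δ * (A * C qi * pconj A) := by
  set X' := pconj A with hX
  set D := X' * c * A with hD
  have h1 : X' * A = toQ (nuP A) := by rw [hX]; exact pconjA_mul_A hA
  have hNne : toQ (nuP A) ≠ 0 := by rw [Ne, toQ_eq_zero]; exact nuP_ne hA
  have e1 : X' * (c * (A * C qi * X')) * A = X' * ((A * C qi * X') * c) * A := by
    rw [h]
  have e2 : X' * (c * (A * C qi * X')) * A = (D * C qi) * toQ (nuP A) := by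
    calc X' * (c * (A * C qi * X')) * A = X' * (c * (A * (C qi * (X' * A)))) := by
          simp only [mul_assoc]
      _ = X' * (c * (A * (C qi * toQ (nuP A)))) := by rw [h1]
      _ = (D * C qi) * toQ (nuP A) := by rw [hD]; simp only [mul_assoc]
  have e3 : X' * ((A * C qi * X') * c) * A = (C qi * D) * toQ (nuP A) := by
    calc X' * ((A * C qi * X') * c) * A = (X' * A) * (C qi * (X' * (c * A))) := by
          simp only [mul_assoc]
      _ = toQ (nuP A) * (C qi * (X' * (c * A))) := by rw [h1]
      _ = (C qi * (X' * (c * A))) * toQ (nuP A) := (toQ_comm _ _)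
      _ = (C qi * D) * toQ (nuP A) := by rw [hD]; simp only [mul_assoc]
  have step1 : D * C qi = C qi * D :=
    mul_right_cancel₀ hNne (e2.symm.trans (e1.trans e3))
  have hD1 : pconj D = -D := by
    rw [hD, pconj_mul, pconj_mul, hX, pconj_pconj, hc]
    simp only [neg_mul, mul_neg]
    rw [mul_assoc]
  obtain ⟨δ', hDstruct⟩ : ∃ δ', D = toQ δ' * C qi := ⟨iP D, vect_i_struct hD1 step1⟩
  refine ⟨δ', ?_⟩
  have e4 : A * D * X' = toQ (nuP A * nuP A) * c := by
    calc A * D * X' = (A * X') * (c * (A * X')) := by rw [hD, hX]; simp only [mul_assoc]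
      _ = (A * X') * (c * toQ (nuP A)) := by rw [hX, toQ_nuP]
      _ = toQ (nuP A) * (c * toQ (nuP A)) := by rw [hX, toQ_nuP]
      _ = toQ (nuP A) * (toQ (nuP A) * c) := by rw [← toQ_comm]
      _ = toQ (nuP A * nuP A) * c := by rw [map_mul, mul_assoc]
  have e5 : A * D * X' = toQ δ' * (A * C qi * X') := by
    rw [hDstruct, ← mul_assoc, ← toQ_comm]
    simp only [mul_assoc]
  rw [← e4, e5, hX]

lemma comm_implies_exists {A c : Polynomial (Quaternion ℝ)} (hA : A ≠ 0)
    (hred : ReducedWrtI A) (hc : pconj c = -c)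
    (h : c * (A * C qi * pconj A) = (A * C qi * pconj A) * c) :
    ∃ μ : Polynomial ℝ, c = toQ μ * (A * C qi * pconj A) := by
  obtain ⟨δ, key⟩ := comm_implies_key hA hc h
  set ν := nuP A with hν
  have hνne : ν ≠ 0 := nuP_ne hA
  have hννne : ν * ν ≠ 0 := mul_ne_zero hνne hνne
  by_cases hδ0 : δ = 0
  · refine ⟨0, ?_⟩
    rw [hδ0] at key
    simp only [map_zero, zero_mul] at key
    rcases mul_eq_zero.mp key with h' | h'
    · exact absurd (toQ_eq_zero.mp h') hννne
    · rw [h', map_zero, zero_mul]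
  set γ := gcd (ν * ν) δ with hγdef
  have hγne : γ ≠ 0 := fun h' => hννne ((gcd_eq_zero_iff _ _).mp h').1
  set n₁ := (ν * ν) / γ with hn₁
  set d₁ := δ / γ with hd₁
  have hfac1 : γ * n₁ = ν * ν := EuclideanDomain.mul_div_cancel' hγne (gcd_dvd_left _ _)
  have hfac2 : γ * d₁ = δ := EuclideanDomain.mul_div_cancel' hγne (gcd_dvd_right _ _)
  have hcop : IsCoprime n₁ d₁ := isCoprime_div_gcd_div_gcd hδ0
  have hn₁ne : n₁ ≠ 0 := fun h' => hννne (by rw [← hfac1, h', mul_zero])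
  have heq2 : toQ n₁ * c = toQ d₁ * (A * C qi * pconj A) := by
    have h9 : toQ γ * (toQ n₁ * c) = toQ γ * (toQ d₁ * (A * C qi * pconj A)) := by
      calc toQ γ * (toQ n₁ * c) = toQ (γ * n₁) * c := by rw [map_mul, mul_assoc]
        _ = toQ (ν * ν) * c := by rw [hfac1]
        _ = toQ δ * (A * C qi * pconj A) := key
        _ = toQ (γ * d₁) * (A * C qi * pconj A) := by rw [hfac2]
        _ = toQ γ * (toQ d₁ * (A * C qi * pconj A)) := by rw [map_mul, mul_assoc]
    exact mul_left_cancel₀ (fun h' => hγne (toQ_eq_zero.mp h')) h9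
  have cq1 : toC n₁ * q1P c = toC d₁ * q1P (A * C qi * pconj A) := by
    have hq := congrArg q1P heq2
    rwa [toQ_eq_mapC_toC, toQ_eq_mapC_toC, q1P_mapC_mul, q1P_mapC_mul] at hq
  have cq2 : toC n₁ * q2P c = toC d₁ * q2P (A * C qi * pconj A) := by
    have hq := congrArg q2P heq2
    rwa [toQ_eq_mapC_toC, toQ_eq_mapC_toC, q2P_mapC_mul, q2P_mapC_mul] at hq
  have hdeg : n₁.natDegree = 0 := by
    by_contra hdeg
    have hpos : 0 < (toC n₁).degree := by
      rw [show toC n₁ = n₁.map (algebraMap ℝ ℂ) from rfl,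
        degree_map_eq_of_injective (algebraMap ℝ ℂ).injective]
      exact natDegree_pos_iff_degree_pos.mp (Nat.pos_of_ne_zero hdeg)
    obtain ⟨z, hz⟩ := Complex.exists_root hpos
    have hz' : (toC n₁).eval z = 0 := hz
    have hzc : (toC n₁).eval (starRingEnd ℂ z) = 0 := by
      rw [toC_eval_conj, hz', map_zero]
    have hdz : ∀ y : ℂ, (toC n₁).eval y = 0 → (toC d₁).eval y ≠ 0 := by
      intro y hy hdy
      obtain ⟨a, b, hab⟩ := hcop
      have h2 := congrArg (fun p => (toC p).eval y) hab
      simp only [map_add, map_mul, map_one, eval_add, eval_mul, eval_one, hy, hdy,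
        mul_zero, zero_add, add_zero] at h2
      exact zero_ne_one h2
    -- evaluate component equations
    have ev : ∀ y : ℂ, (toC n₁).eval y = 0 →
        ((q1P (A * C qi * pconj A)).eval y = 0 ∧ (q2P (A * C qi * pconj A)).eval y = 0) := by
      intro y hy
      constructor
      · have h3 := congrArg (Polynomial.eval y) cq1
        simp only [eval_mul, hy, zero_mul] at h3
        rcases mul_eq_zero.mp h3.symm with h' | h'
        · exact absurd h' (hdz y hy)
        · exact h'
      · have h3 := congrArg (Polynomial.eval y) cq2
        simp only [eval_mul, hy, zero_mul] at h3
        rcases mul_eq_zero.mp h3.symm with h' | h'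
        · exact absurd h' (hdz y hy)
        · exact h'
    have evz := ev z hz'
    have evzc := ev (starRingEnd ℂ z) hzc
    -- translate into conditions on P₁, P₂
    have hI2 : (2 : ℂ) * Complex.I ≠ 0 := by simp [Complex.I_ne_zero]
    have prod0 : ∀ y : ℂ, (q2P (A * C qi * pconj A)).eval y = 0 →
        (q1P A).eval y * (q2P A).eval y = 0 := by
      intro y hy
      rw [q2P_F] at hy
      simp only [eval_neg, eval_mul, eval_ofNat, eval_C, neg_eq_zero] at hy
      rcases mul_eq_zero.mp hy with h' | h'
      · exact absurd h' hI2
      · exact h'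
    have h1 := prod0 z evz.2
    have h2 := prod0 (starRingEnd ℂ z) evzc.2
    have h3 : (q1P A).eval z * starRingEnd ℂ ((q1P A).eval (starRingEnd ℂ z))
        = (q2P A).eval z * starRingEnd ℂ ((q2P A).eval (starRingEnd ℂ z)) := by
      have hy := evz.1
      rw [q1P_F] at hy
      simp only [eval_mul, eval_sub, eval_C, cconj_eval] at hy
      rcases mul_eq_zero.mp hy with h' | h'
      · exact absurd h' Complex.I_ne_zero
      · exact sub_eq_zero.mp h'
    exact reduced_no_root hred h1 h2 h3
  have hC : n₁ = C (n₁.coeff 0) := eq_C_of_natDegree_eq_zero hdeg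
  set u := n₁.coeff 0 with hu_def
  have hu : u ≠ 0 := fun h' => hn₁ne (by rw [hC, h', C_0])
  refine ⟨C u⁻¹ * d₁, ?_⟩
  calc c = toQ (C u⁻¹ * n₁) * c := by
        rw [hC, ← C_mul, inv_mul_cancel₀ hu, C_1, map_one, one_mul]
    _ = toQ (C u⁻¹) * (toQ n₁ * c) := by rw [map_mul, mul_assoc]
    _ = toQ (C u⁻¹) * (toQ d₁ * (A * C qi * pconj A)) := by rw [heq2]
    _ = toQ (C u⁻¹ * d₁) * (A * C qi * pconj A) := by
        rw [map_mul]; exact (mul_assoc _ _ _).symm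

/-- For nonzero `α ∈ ℝ[t]`, vectorial `b ∈ ℍ[t]` and nonzero `A ∈ ℍ[t]`
reduced with respect to `i`, setting `c = α·b′ − α′·b`, the following are equivalent:
(i) `c` commutes with `A i Ā` (vanishing cross product of vector parts);
(ii) `c·(A j Ā) + (A j Ā)·c = 0` and `c·(A k Ā) + (A k Ā)·c = 0` (orthogonality);
(iii) there exists `μ ∈ ℝ[t]` with `c = μ·(A i Ā)`. -/
theorem framing_conditions_equivalent (α : Polynomial ℝ) (hα : α ≠ 0)
    (b A : Polynomial (Quaternion ℝ)) (hb : b + pconj b = 0)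
    (hA : A ≠ 0) (hred : ReducedWrtI A) :
    ((toQ α * derivative b - toQ (derivative α) * b) * (A * Polynomial.C qi * pconj A)
        = (A * Polynomial.C qi * pconj A) * (toQ α * derivative b - toQ (derivative α) * b) ↔
      ((toQ α * derivative b - toQ (derivative α) * b) * (A * Polynomial.C qj * pconj A)
          + (A * Polynomial.C qj * pconj A) * (toQ α * derivative b - toQ (derivative α) * b) = 0 ∧
       (toQ α * derivative b - toQ (derivative α) * b) * (A * Polynomial.C qk * pconj A)
          + (A * Polynomial.C qk * pconj A) * (toQ α * derivative b - toQ (derivative α) * b) = 0)) ∧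
    ((toQ α * derivative b - toQ (derivative α) * b) * (A * Polynomial.C qi * pconj A)
        = (A * Polynomial.C qi * pconj A) * (toQ α * derivative b - toQ (derivative α) * b) ↔
      ∃ μ : Polynomial ℝ,
        toQ α * derivative b - toQ (derivative α) * b = toQ μ * (A * Polynomial.C qi * pconj A)) := by
  have hpb : pconj b = -b := eq_neg_of_add_eq_zero_right hb
  set c := toQ α * derivative b - toQ (derivative α) * b with hcdef
  have hc : pconj c = -c := by
    rw [hcdef, pconj_sub, pconj_mul, pconj_mul, pconj_toQ, pconj_toQ, pconj_derivative, hpb,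
      derivative_neg]
    simp only [neg_mul, sub_neg_eq_add, neg_sub]
    rw [← toQ_comm, ← toQ_comm]
    abel
  constructor
  · exact ⟨fun h => comm_implies_ortho hA hc h, fun h => ortho_implies_comm hA h.1 h.2⟩
  · constructor
    · intro h
      exact comm_implies_exists hA hred hc h
    · rintro ⟨μ, hμ⟩
      rw [hμ, central_left]
      exact mul_assoc _ _ _
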